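/- Theorem 2: If ‖xᵢⱼ‖ ≥ r_s > 0, then the control input uᵢ = −m(γ + 1/T_c)ẋᵢ satisfies the asymmetric decentralized CBF constraint: −2⟨ẋᵢ, xᵢⱼ⟩/‖xᵢⱼ‖ + T_c(yᵢⱼẋᵢⱼ − xᵢⱼẏᵢⱼ)²/‖xᵢⱼ‖³ − 2L_g h(qᵢⱼ)·uᵢ + γ(‖xᵢⱼ‖ − 2T_c⟨ẋᵢ, xᵢⱼ⟩/‖xᵢⱼ‖ − r_s) ≥ 0. -/
import Mathlib


/-- Theorem 2: if ‖xᵢⱼ‖ ≥ r_s > 0, the input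
uᵢ = −m(γ + 1/T_c)ẋᵢ satisfies the asymmetric decentralized CBF constraint,
where L_g h(qᵢⱼ)·uᵢ = (T_c/(m‖xᵢⱼ‖))⟨xᵢⱼ, uᵢ⟩.  Components:
xij = (x1, y1), ẋij = (vx, vy), ẋᵢ = vi ∈ ℝ², n = ‖xᵢⱼ‖. -/
theorem stmt_8 (m γ Tc rs : ℝ) (hm : 0 < m) (hγ : 0 < γ) (hTc : 0 < Tc)
    (hrs : 0 < rs)
    (x1 y1 vx vy vi1 vi2 : ℝ) (n : ℝ)
    (hn : n = Real.sqrt (x1 ^ 2 + y1 ^ 2)) (hne : (x1, y1) ≠ (0, 0))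
    (hsafe : n ≥ rs)
    (ui1 ui2 : ℝ)
    (hui1 : ui1 = -(m * (γ + 1 / Tc)) * vi1)
    (hui2 : ui2 = -(m * (γ + 1 / Tc)) * vi2) :
    -2 * (vi1 * x1 + vi2 * y1) / n + Tc * (y1 * vx - x1 * vy) ^ 2 / n ^ 3
      - 2 * (Tc / (m * n)) * (x1 * ui1 + y1 * ui2)
      + γ * (n - 2 * Tc * (vi1 * x1 + vi2 * y1) / n - rs) ≥ 0 := by
  have hn0 : 0 < n := lt_of_lt_of_le hrs hsafe
  subst hui1 hui2
  have key : -2 * (vi1 * x1 + vi2 * y1) / n + Tc * (y1 * vx - x1 * vy) ^ 2 / n ^ 3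
      - 2 * (Tc / (m * n)) * (x1 * (-(m * (γ + 1 / Tc)) * vi1) + y1 * (-(m * (γ + 1 / Tc)) * vi2))
      + γ * (n - 2 * Tc * (vi1 * x1 + vi2 * y1) / n - rs)
      = Tc * (y1 * vx - x1 * vy) ^ 2 / n ^ 3 + γ * (n - rs) := by
    field_simp
    ring
  rw [key]
  have h1 : 0 ≤ Tc * (y1 * vx - x1 * vy) ^ 2 / n ^ 3 := by positivity
  have h2 : 0 ≤ γ * (n - rs) := by
    apply mul_nonneg hγ.le; linarith
  linarith
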